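/- Let U = ∂_{ρ₁,e₁} and V = ∂_{ρ₂,e₂} be homogeneous derivations with c₂ = ⟨ρ₂,e₁⟩ ≥ 1 and d₁ = ⟨ρ₁,e₂⟩. Then for all 0 ≤ m ≤ d₁, ad_U^m(V) = ∂_{r_m, f_m} where r_m = (d₁!/(d₁−m)!) ρ₂ − m c₂ (d₁!/(d₁−m+1)!) ρ₁ and f_m = e₂ + m e₁. -/

import Mathlib

/-- The homogeneous derivation `∂_{ρ,e}` of the (semi)group algebra, defined on the
monomial basis by `∂_{ρ,e}(χ^m) = ⟨ρ,m⟩ χ^{m+e}`. -/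
noncomputable def homDer (K : Type*) [Field K] {M : Type*} [AddCommGroup M]
    (ρ : M →+ ℤ) (e : M) :
    AddMonoidAlgebra K M →ₗ[K] AddMonoidAlgebra K M :=
  (Finsupp.lsum K fun m =>
    LinearMap.toSpanSingleton K (AddMonoidAlgebra K M)
      ((ρ m : ℤ) • AddMonoidAlgebra.single (m + e) (1 : K))) ∘ₗ
    (AddMonoidAlgebra.coeffLinearEquiv K).toLinearMap

lemma homDer_single {K : Type*} [Field K] {M : Type*} [AddCommGroup M]
    (ρ : M →+ ℤ) (e : M) (n : M) (c : K) :
    homDer K ρ e (AddMonoidAlgebra.single n c)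
      = (ρ n) • AddMonoidAlgebra.single (n + e) c := by
  rw [homDer, LinearMap.comp_apply]
  show (Finsupp.lsum K _) (Finsupp.single n c) = _
  erw [Finsupp.lsum_single]
  rw [LinearMap.toSpanSingleton_apply, smul_comm]
  show (ρ n) • c • AddMonoidAlgebra.single (n + e) (1 : K) = _
  rw [AddMonoidAlgebra.smul_single, smul_eq_mul, mul_one]

lemma homDer_comm {K : Type*} [Field K] {M : Type*} [AddCommGroup M]
    (ρ ρ' : M →+ ℤ) (e e' : M) :
    homDer K ρ e ∘ₗ homDer K ρ' e' - homDer K ρ' e' ∘ₗ homDer K ρ e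
      = homDer K ((ρ e') • ρ' - (ρ' e) • ρ) (e' + e) := by
  apply AddMonoidAlgebra.lhom_ext'
  intro n
  apply LinearMap.ext
  intro c
  simp only [LinearMap.comp_apply, AddMonoidAlgebra.lsingle_apply, LinearMap.sub_apply,
    homDer_single, map_zsmul, smul_smul, add_assoc, AddMonoidHom.sub_apply,
    AddMonoidHom.smul_apply, smul_eq_mul, map_add]
  rw [add_comm e' e, ← sub_smul]
  ring_nf

lemma fact_div_succ {d m : ℕ} (h : m < d) :
    d.factorial / (d - (m+1)).factorial = (d - m) * (d.factorial / (d - m).factorial) := by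
  have h1 : (d - (m+1)).factorial ∣ d.factorial := Nat.factorial_dvd_factorial (by omega)
  have h2 : (d - m).factorial ∣ d.factorial := Nat.factorial_dvd_factorial (by omega)
  have key : (d - m).factorial = (d - m) * (d - (m+1)).factorial := by
    have hh : d - m = (d - (m+1)) + 1 := by omega
    rw [hh, Nat.factorial_succ]
  apply Nat.eq_of_mul_eq_mul_left (Nat.factorial_pos (d - (m+1)))
  rw [Nat.mul_div_cancel' h1]
  symm
  calc (d-(m+1)).factorial * ((d-m) * (d.factorial/(d-m).factorial))
      = (d-m).factorial * (d.factorial/(d-m).factorial) := by rw [key]; ring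
    _ = d.factorial := Nat.mul_div_cancel' h2

lemma fact_div_pred {d m : ℕ} (h1 : 1 ≤ m) (h : m ≤ d) :
    (d - m + 1) * (d.factorial / (d - m + 1).factorial) = d.factorial / (d - m).factorial := by
  have hle : d - m + 1 ≤ d := by omega
  have hd1 : (d - m + 1).factorial ∣ d.factorial := Nat.factorial_dvd_factorial hle
  have hd2 : (d - m).factorial ∣ d.factorial := Nat.factorial_dvd_factorial (by omega)
  apply Nat.eq_of_mul_eq_mul_left (Nat.factorial_pos (d - m))
  rw [Nat.mul_div_cancel' hd2]
  calc (d-m).factorial * ((d-m+1) * (d.factorial / (d - m + 1).factorial))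
      = (d-m+1).factorial * (d.factorial / (d - m + 1).factorial) := by
        rw [Nat.factorial_succ]; ring
    _ = d.factorial := Nat.mul_div_cancel' hd1

/-- for `U = ∂_{ρ₁,e₁}`, `V = ∂_{ρ₂,e₂}` with `e₁, e₂` Demazure roots
(`⟨ρ₁,e₁⟩ = ⟨ρ₂,e₂⟩ = −1`), `c₂ = ⟨ρ₂,e₁⟩ ≥ 1` and `d₁ = ⟨ρ₁,e₂⟩ = d ≥ 0`, one has,
for all `0 ≤ m ≤ d₁`,
`ad_U^m(V) = ∂_{r_m, f_m}` with `r_m = (d₁!/(d₁−m)!) ρ₂ − m c₂ (d₁!/(d₁−m+1)!) ρ₁`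
and `f_m = e₂ + m e₁`. -/
theorem stmt6 {K : Type*} [Field K] [CharZero K] {M : Type*} [AddCommGroup M]
    (ρ₁ ρ₂ : M →+ ℤ) (e₁ e₂ : M)
    (h₁ : ρ₁ e₁ = -1) (h₂ : ρ₂ e₂ = -1)
    (hc : 1 ≤ ρ₂ e₁)
    (d : ℕ) (hd : ρ₁ e₂ = (d : ℤ))
    (m : ℕ) (hm : m ≤ d) :
    (fun W => homDer K ρ₁ e₁ ∘ₗ W - W ∘ₗ homDer K ρ₁ e₁)^[m] (homDer K ρ₂ e₂)
      = homDer K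
          (((d.factorial / (d - m).factorial : ℕ) : ℤ) • ρ₂
            - ((m : ℤ) * (ρ₂ e₁) * ((d.factorial / (d - m + 1).factorial : ℕ) : ℤ)) • ρ₁)
          (e₂ + m • e₁) := by
  induction m with
  | zero =>
      simp [Nat.div_self (Nat.factorial_pos d)]
  | succ m ih =>
      have hm' : m ≤ d := by omega
      have hidx : d - (m + 1) + 1 = d - m := by omega
      rw [Function.iterate_succ_apply']
      rw [ih hm']
      show homDer K ρ₁ e₁ ∘ₗ homDer K _ _ - homDer K _ _ ∘ₗ homDer K ρ₁ e₁ = _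
      rw [homDer_comm]
      have hQ : (e₂ + m • e₁) + e₁ = e₂ + (m + 1) • e₁ := by
        rw [succ_nsmul, add_assoc]
      rw [hQ, hidx]
      congr 1
      ext x
      set A : ℤ := ((d.factorial / (d - m).factorial : ℕ) : ℤ) with hA
      set B : ℤ := ((d.factorial / (d - m + 1).factorial : ℕ) : ℤ) with hB
      set A' : ℤ := ((d.factorial / (d - (m + 1)).factorial : ℕ) : ℤ) with hA'
      have fa : ((d : ℤ) - m) * A = A' := by
        rw [hA, hA', fact_div_succ (show m < d by omega)]
        push_cast [Nat.cast_sub hm']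
        ring
      have fb : (m : ℤ) * (((d : ℤ) - m + 1) * B) = (m : ℤ) * A := by
        rcases Nat.eq_zero_or_pos m with hm0 | hm0
        · subst hm0; simp
        · rw [hA, hB, ← fact_div_pred hm0 hm']
          push_cast [Nat.cast_sub hm']
          ring
      simp only [AddMonoidHom.sub_apply, AddMonoidHom.smul_apply, map_add, map_nsmul,
        nsmul_eq_mul, smul_eq_mul, h₁, hd, Nat.cast_add, Nat.cast_one]
      linear_combination (ρ₂ x) * fa - (ρ₂ e₁) * (ρ₁ x) * fb
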